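/- Let N ∈ ℕ and κ > 0, and let t, t' ∈ [0,1]. If |t − t'| < κ / (2πN), then |μ̂_t(ξ) − μ̂_{t'}(ξ)| < κ for all ξ ∈ [−N, N]. -/

import Mathlib

open MeasureTheory Filter Set
open scoped ENNReal NNReal

/-- The Fourier transform of a measure on `ℝ`: `μ̂(ξ) = ∫ e^{2πiξx} dμ(x)`. -/
noncomputable def ft (μ : Measure ℝ) (ξ : ℝ) : ℂ :=
  ∫ x, Complex.exp (((2 * Real.pi * ξ * x : ℝ) : ℂ) * Complex.I) ∂μ

/-- `μ_t` is invariant for the IFS `{x/10, (x+1)/10, (x+t)/10}` with weights `(1/3,1/3,1/3)`. -/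
def muInv (t : ℝ) (μ : Measure ℝ) : Prop :=
  μ = (3 : ℝ≥0∞)⁻¹ • (Measure.map (fun x : ℝ => x / 10) μ +
    Measure.map (fun x : ℝ => (x + 1) / 10) μ + Measure.map (fun x : ℝ => (x + t) / 10) μ)

/-- `e^{iθ}` for real `θ`. -/
noncomputable def eth (θ : ℝ) : ℂ := Complex.exp ((θ : ℂ) * Complex.I)

lemma ft_eq (μ : Measure ℝ) (ξ : ℝ) : ft μ ξ = ∫ x, eth (2 * Real.pi * ξ * x) ∂μ := rfl

lemma abs_eth (θ : ℝ) : ‖eth θ‖ = 1 := Complex.norm_exp_ofReal_mul_I θ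

lemma eth_add (a b : ℝ) : eth (a + b) = eth a * eth b := by
  rw [eth, eth, eth, ← Complex.exp_add]
  push_cast
  ring_nf

lemma eth_continuous : Continuous eth :=
  Complex.continuous_exp.comp (Complex.continuous_ofReal.mul continuous_const)

lemma abs_eth_sub_one (θ : ℝ) : ‖eth θ - 1‖ ≤ |θ| := by
  have hre : (eth θ - 1).re = Real.cos θ - 1 := by
    simp [eth, Complex.exp_ofReal_mul_I_re]
  have him : (eth θ - 1).im = Real.sin θ := by
    simp [eth, Complex.exp_ofReal_mul_I_im]
  rw [Complex.norm_def, Complex.normSq_apply, hre, him]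
  have h2 : Real.sin (θ / 2) ^ 2 = 1 / 2 - Real.cos θ / 2 := by
    rw [Real.sin_sq_eq_half_sub, show 2 * (θ / 2) = θ from by ring]
  have h3 := Real.sin_sq_add_cos_sq θ
  have h1 : (Real.cos θ - 1) * (Real.cos θ - 1) + Real.sin θ * Real.sin θ
      = (2 * Real.sin (θ / 2)) ^ 2 := by nlinarith [h2, h3]
  rw [h1, Real.sqrt_sq_eq_abs]
  have h4 : |Real.sin (θ / 2)| ≤ |θ / 2| := Real.abs_sin_le_abs
  have h5 : |θ / 2| = |θ| / 2 := by rw [abs_div]; norm_num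
  rw [h5] at h4
  rw [abs_mul, abs_two]
  linarith

lemma abs_eth_sub (a b : ℝ) : ‖eth a - eth b‖ ≤ |a - b| := by
  have h : eth a - eth b = eth b * (eth (a - b) - 1) := by
    rw [mul_sub, ← eth_add]
    ring_nf
  rw [h, norm_mul, abs_eth, one_mul]
  exact abs_eth_sub_one _

lemma eth_integrable (μ : Measure ℝ) [IsFiniteMeasure μ] (g : ℝ → ℝ) (hg : Continuous g) :
    Integrable (fun x => eth (g x)) μ := by
  apply Integrable.mono' (integrable_const (1 : ℝ))
  · exact (eth_continuous.comp hg).aestronglyMeasurable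
  · filter_upwards with x
    rw [abs_eth]

lemma abs_ft_le (μ : Measure ℝ) [IsProbabilityMeasure μ] (ξ : ℝ) :
    ‖ft μ ξ‖ ≤ 1 := by
  rw [ft_eq]
  have := norm_integral_le_of_norm_le_const (μ := μ)
    (f := fun x => eth (2 * Real.pi * ξ * x)) (C := 1)
    (by filter_upwards with x; rw [abs_eth])
  simpa using this

set_option maxHeartbeats 1000000 in
lemma ftRec (t : ℝ) (μ : Measure ℝ) [IsProbabilityMeasure μ] (hinv : muInv t μ) (ξ : ℝ) :
    ft μ ξ = (3 : ℂ)⁻¹ * ((1 + eth (2 * Real.pi * ξ * (1 / 10))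
      + eth (2 * Real.pi * ξ * (t / 10))) * ft μ (ξ / 10)) := by
  have hg0 : Continuous (fun x : ℝ => x / 10) := continuous_id.div_const 10
  have hg1 : Continuous (fun x : ℝ => (x + 1) / 10) :=
    (continuous_id.add continuous_const).div_const 10
  have hg2 : Continuous (fun x : ℝ => (x + t) / 10) :=
    (continuous_id.add continuous_const).div_const 10
  have hfc : Continuous (fun x : ℝ => eth (2 * Real.pi * ξ * x)) :=
    eth_continuous.comp (continuous_const.mul continuous_id)
  have h0 : IsProbabilityMeasure (Measure.map (fun x : ℝ => x / 10) μ) :=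
    Measure.isProbabilityMeasure_map hg0.measurable.aemeasurable
  have h1 : IsProbabilityMeasure (Measure.map (fun x : ℝ => (x + 1) / 10) μ) :=
    Measure.isProbabilityMeasure_map hg1.measurable.aemeasurable
  have h2 : IsProbabilityMeasure (Measure.map (fun x : ℝ => (x + t) / 10) μ) :=
    Measure.isProbabilityMeasure_map hg2.measurable.aemeasurable
  have hi0 : Integrable (fun x : ℝ => eth (2 * Real.pi * ξ * x))
      (Measure.map (fun x : ℝ => x / 10) μ) :=
    eth_integrable _ _ (continuous_const.mul continuous_id)
  have hi1 : Integrable (fun x : ℝ => eth (2 * Real.pi * ξ * x))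
      (Measure.map (fun x : ℝ => (x + 1) / 10) μ) :=
    eth_integrable _ _ (continuous_const.mul continuous_id)
  have hi2 : Integrable (fun x : ℝ => eth (2 * Real.pi * ξ * x))
      (Measure.map (fun x : ℝ => (x + t) / 10) μ) :=
    eth_integrable _ _ (continuous_const.mul continuous_id)
  have m0 : ∫ x, eth (2 * Real.pi * ξ * x) ∂(Measure.map (fun x : ℝ => x / 10) μ)
      = ft μ (ξ / 10) := by
    rw [integral_map hg0.measurable.aemeasurable hfc.aestronglyMeasurable, ft_eq]
    apply integral_congr_ae
    filter_upwards with x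
    show eth (2 * Real.pi * ξ * (x / 10)) = eth (2 * Real.pi * (ξ / 10) * x)
    rw [show 2 * Real.pi * ξ * (x / 10) = 2 * Real.pi * (ξ / 10) * x from by ring]
  have m1 : ∫ x, eth (2 * Real.pi * ξ * x) ∂(Measure.map (fun x : ℝ => (x + 1) / 10) μ)
      = eth (2 * Real.pi * ξ * (1 / 10)) * ft μ (ξ / 10) := by
    rw [integral_map hg1.measurable.aemeasurable hfc.aestronglyMeasurable, ft_eq,
      ← integral_const_mul]
    apply integral_congr_ae
    filter_upwards with x
    show eth (2 * Real.pi * ξ * ((x + 1) / 10)) = _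
    rw [show 2 * Real.pi * ξ * ((x + 1) / 10)
        = 2 * Real.pi * ξ * (1 / 10) + 2 * Real.pi * (ξ / 10) * x from by ring, eth_add]
  have m2 : ∫ x, eth (2 * Real.pi * ξ * x) ∂(Measure.map (fun x : ℝ => (x + t) / 10) μ)
      = eth (2 * Real.pi * ξ * (t / 10)) * ft μ (ξ / 10) := by
    rw [integral_map hg2.measurable.aemeasurable hfc.aestronglyMeasurable, ft_eq,
      ← integral_const_mul]
    apply integral_congr_ae
    filter_upwards with x
    show eth (2 * Real.pi * ξ * ((x + t) / 10)) = _
    rw [show 2 * Real.pi * ξ * ((x + t) / 10)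
        = 2 * Real.pi * ξ * (t / 10) + 2 * Real.pi * (ξ / 10) * x from by ring, eth_add]
  have key : ft μ ξ = ((3 : ℝ≥0∞)⁻¹).toReal •
      ((∫ x, eth (2 * Real.pi * ξ * x) ∂(Measure.map (fun x : ℝ => x / 10) μ))
      + (∫ x, eth (2 * Real.pi * ξ * x) ∂(Measure.map (fun x : ℝ => (x + 1) / 10) μ))
      + ∫ x, eth (2 * Real.pi * ξ * x) ∂(Measure.map (fun x : ℝ => (x + t) / 10) μ)) := by
    rw [ft_eq]
    conv_lhs => rw [hinv]
    rw [integral_smul_measure, integral_add_measure (hi0.add_measure hi1) hi2,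
      integral_add_measure hi0 hi1]
  rw [key, m0, m1, m2]
  have h3 : ((3 : ℝ≥0∞)⁻¹).toReal = (3 : ℝ)⁻¹ := by
    rw [ENNReal.toReal_inv]; norm_num
  rw [h3, Complex.real_smul]
  push_cast
  ring

lemma ft_tendsto_zero (μ : Measure ℝ) [IsProbabilityMeasure μ] (ξ : ℝ) :
    Tendsto (fun n : ℕ => ft μ (ξ / 10 ^ n)) atTop (nhds 1) := by
  have hlim : ∀ x : ℝ, Tendsto (fun n : ℕ => eth (2 * Real.pi * (ξ / 10 ^ n) * x)) atTop
      (nhds (1 : ℂ)) := by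
    intro x
    have h1 : Tendsto (fun n : ℕ => (ξ / 10 ^ n : ℝ)) atTop (nhds 0) := by
      have := tendsto_pow_atTop_nhds_zero_of_lt_one (r := (10 : ℝ)⁻¹) (by norm_num) (by norm_num)
      have h2 := this.const_mul ξ
      simp only [mul_zero] at h2
      convert h2 using 2 with n
      rw [div_eq_mul_inv, inv_pow]
    have h3 : Tendsto (fun n : ℕ => 2 * Real.pi * (ξ / 10 ^ n) * x) atTop (nhds 0) := by
      have := (h1.const_mul (2 * Real.pi)).mul_const x
      simpa using this
    have h4 := (eth_continuous.tendsto 0).comp h3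
    have h5 : eth 0 = 1 := by simp [eth]
    rw [h5] at h4
    exact h4
  have key := tendsto_integral_of_dominated_convergence (μ := μ)
    (F := fun (n : ℕ) (x : ℝ) => eth (2 * Real.pi * (ξ / 10 ^ n) * x))
    (f := fun _ => (1 : ℂ)) (bound := fun _ => (1 : ℝ))
    (fun n => (eth_continuous.comp (continuous_const.mul continuous_id)).aestronglyMeasurable)
    (integrable_const 1)
    (fun n => by filter_upwards with x; rw [abs_eth])
    (by filter_upwards with x; exact hlim x)
  have h6 : (∫ _x, (1 : ℂ) ∂μ) = 1 := by simp
  rw [h6] at key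
  exact key

lemma step_bound (t t' : ℝ) (μ μ' : Measure ℝ)
    [IsProbabilityMeasure μ] [IsProbabilityMeasure μ']
    (hinv : muInv t μ) (hinv' : muInv t' μ') (ξ : ℝ) :
    ‖ft μ ξ - ft μ' ξ‖ ≤
      ‖ft μ (ξ / 10) - ft μ' (ξ / 10)‖ + 2 * Real.pi * |t - t'| / 3 * (|ξ| / 10) := by
  rw [ftRec t μ hinv ξ, ftRec t' μ' hinv' ξ]
  set P := ft μ (ξ / 10)
  set P' := ft μ' (ξ / 10)
  set E := eth (2 * Real.pi * ξ * (1 / 10)) with hEdef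
  set F := eth (2 * Real.pi * ξ * (t / 10)) with hFdef
  set F' := eth (2 * Real.pi * ξ * (t' / 10)) with hF'def
  have hsplit : (3 : ℂ)⁻¹ * ((1 + E + F) * P) - (3 : ℂ)⁻¹ * ((1 + E + F') * P')
      = (3 : ℂ)⁻¹ * ((1 + E + F) * (P - P')) + (3 : ℂ)⁻¹ * ((F - F') * P') := by ring
  rw [hsplit]
  have hE : ‖E‖ = 1 := abs_eth _
  have hF : ‖F‖ = 1 := abs_eth _
  have habs1 : ‖1 + E + F‖ ≤ 3 := by
    calc ‖1 + E + F‖ ≤ ‖1 + E‖ + ‖F‖ := norm_add_le _ _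
    _ ≤ ‖(1:ℂ)‖ + ‖E‖ + ‖F‖ := by
        have := norm_add_le (1 : ℂ) E
        linarith
    _ = 3 := by rw [hE, hF, norm_one]; norm_num
  have habsF : ‖F - F'‖ ≤ 2 * Real.pi * |ξ| * |t - t'| / 10 := by
    rw [hFdef, hF'def]
    have h := abs_eth_sub (2 * Real.pi * ξ * (t / 10)) (2 * Real.pi * ξ * (t' / 10))
    have heq : 2 * Real.pi * ξ * (t / 10) - 2 * Real.pi * ξ * (t' / 10)
        = 2 * Real.pi * ξ * ((t - t') / 10) := by ring
    rw [heq] at h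
    have h10 : |(10 : ℝ)| = 10 := by norm_num
    have habseq : |2 * Real.pi * ξ * ((t - t') / 10)| = 2 * Real.pi * |ξ| * |t - t'| / 10 := by
      rw [abs_mul, abs_mul, abs_mul, abs_div, h10, abs_two, abs_of_nonneg Real.pi_pos.le]
      ring
    rw [habseq] at h
    exact h
  have habsP' : ‖P'‖ ≤ 1 := abs_ft_le μ' (ξ / 10)
  calc ‖(3 : ℂ)⁻¹ * ((1 + E + F) * (P - P')) + (3 : ℂ)⁻¹ * ((F - F') * P')‖
      ≤ ‖(3 : ℂ)⁻¹ * ((1 + E + F) * (P - P'))‖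
        + ‖(3 : ℂ)⁻¹ * ((F - F') * P')‖ := norm_add_le _ _
    _ = (3 : ℝ)⁻¹ * (‖1 + E + F‖ * ‖P - P'‖)
        + (3 : ℝ)⁻¹ * (‖F - F'‖ * ‖P'‖) := by
        rw [norm_mul, norm_mul, norm_mul, norm_mul]
        norm_num
    _ ≤ (3 : ℝ)⁻¹ * (3 * ‖P - P'‖)
        + (3 : ℝ)⁻¹ * (2 * Real.pi * |ξ| * |t - t'| / 10 * 1) := by
        gcongr
    _ = ‖P - P'‖ + 2 * Real.pi * |t - t'| / 3 * (|ξ| / 10) := by ring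

lemma iter_bound (t t' : ℝ) (μ μ' : Measure ℝ)
    [IsProbabilityMeasure μ] [IsProbabilityMeasure μ']
    (hinv : muInv t μ) (hinv' : muInv t' μ') :
    ∀ (n : ℕ) (ξ : ℝ), ‖ft μ ξ - ft μ' ξ‖ ≤
      ‖ft μ (ξ / 10 ^ n) - ft μ' (ξ / 10 ^ n)‖
        + 2 * Real.pi * |t - t'| / 3 * (|ξ| / 9) := by
  have hb : 0 ≤ 2 * Real.pi * |t - t'| / 3 := by positivity
  intro n
  induction n with
  | zero =>
      intro ξ
      simp only [pow_zero, div_one]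
      have : 0 ≤ 2 * Real.pi * |t - t'| / 3 * (|ξ| / 9) := by positivity
      linarith
  | succ n ih =>
      intro ξ
      have h1 := step_bound t t' μ μ' hinv hinv' ξ
      have h2 := ih (ξ / 10)
      have h3 : ξ / 10 / 10 ^ n = ξ / 10 ^ (n + 1) := by
        rw [div_div, ← pow_succ']
      have h4 : |ξ / 10| = |ξ| / 10 := by
        rw [abs_div]; norm_num
      rw [h3, h4] at h2
      calc ‖ft μ ξ - ft μ' ξ‖
          ≤ ‖ft μ (ξ / 10) - ft μ' (ξ / 10)‖
            + 2 * Real.pi * |t - t'| / 3 * (|ξ| / 10) := h1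
        _ ≤ ‖ft μ (ξ / 10 ^ (n + 1)) - ft μ' (ξ / 10 ^ (n + 1))‖
            + 2 * Real.pi * |t - t'| / 3 * (|ξ| / 10 / 9)
            + 2 * Real.pi * |t - t'| / 3 * (|ξ| / 10) := by linarith
        _ = ‖ft μ (ξ / 10 ^ (n + 1)) - ft μ' (ξ / 10 ^ (n + 1))‖
            + 2 * Real.pi * |t - t'| / 3 * (|ξ| / 9) := by ring

/-- If `|t − t'| < κ/(2πN)` then `|μ̂_t(ξ) − μ̂_{t'}(ξ)| < κ` for all `ξ ∈ [−N, N]`. -/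
theorem stmt13 (N : ℕ) (κ : ℝ) (hκ : 0 < κ) (t t' : ℝ)
    (ht : t ∈ Set.Icc (0 : ℝ) 1) (ht' : t' ∈ Set.Icc (0 : ℝ) 1)
    (μ μ' : Measure ℝ)
    (hμ : IsProbabilityMeasure μ) (hμ' : IsProbabilityMeasure μ')
    (hinv : muInv t μ) (hinv' : muInv t' μ')
    (hclose : |t - t'| < κ / (2 * Real.pi * N)) :
    ∀ ξ ∈ Set.Icc (-(N : ℝ)) (N : ℝ), ‖ft μ ξ - ft μ' ξ‖ < κ := by
  intro ξ hξ
  rcases Nat.eq_zero_or_pos N with hN | hN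
  · subst hN
    simp only [Nat.cast_zero, mul_zero, div_zero] at hclose
    exact absurd hclose (not_lt.2 (abs_nonneg _))
  have hNpos : (0 : ℝ) < N := by exact_mod_cast hN
  have h2piN : (0 : ℝ) < 2 * Real.pi * N := by positivity
  have hclose' : |t - t'| * (2 * Real.pi * N) < κ := by
    rw [lt_div_iff₀ h2piN] at hclose
    exact hclose
  have hxi : |ξ| ≤ N := abs_le.2 hξ
  have hmain : ‖ft μ ξ - ft μ' ξ‖ ≤ 2 * Real.pi * |t - t'| / 3 * (|ξ| / 9) := by
    have h1 := iter_bound t t' μ μ' hinv hinv'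
    have h2 : Tendsto (fun n : ℕ => ‖ft μ (ξ / 10 ^ n) - ft μ' (ξ / 10 ^ n)‖
        + 2 * Real.pi * |t - t'| / 3 * (|ξ| / 9)) atTop
        (nhds (0 + 2 * Real.pi * |t - t'| / 3 * (|ξ| / 9))) := by
      have ha := ft_tendsto_zero μ ξ
      have hb := ft_tendsto_zero μ' ξ
      have hc : Tendsto (fun n : ℕ => ft μ (ξ / 10 ^ n) - ft μ' (ξ / 10 ^ n)) atTop
          (nhds (1 - 1)) := ha.sub hb
      rw [sub_self] at hc
      have hd : Tendsto (fun n : ℕ => ‖ft μ (ξ / 10 ^ n) - ft μ' (ξ / 10 ^ n)‖)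
          atTop (nhds 0) := by
        have := (continuous_norm.tendsto (0:ℂ)).comp hc
        simpa [Function.comp_def] using this
      exact hd.add tendsto_const_nhds
    have h3 := ge_of_tendsto' h2 (fun n => h1 n ξ)
    rw [zero_add] at h3
    exact h3
  have hfin : 2 * Real.pi * |t - t'| / 3 * (|ξ| / 9) < κ := by
    have hpos : (0 : ℝ) ≤ 2 * Real.pi * |t - t'| := by positivity
    have hmul := mul_le_mul_of_nonneg_left hxi hpos
    have hle : 2 * Real.pi * |t - t'| / 3 * (|ξ| / 9)
        ≤ |t - t'| * (2 * Real.pi * N) / 27 := by nlinarith [hmul]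
    calc 2 * Real.pi * |t - t'| / 3 * (|ξ| / 9) ≤ |t - t'| * (2 * Real.pi * N) / 27 := hle
      _ < κ / 27 := by linarith
      _ < κ := by linarith
  exact lt_of_le_of_lt hmain hfin
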